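/- Let f : ℝⁿ → ℝ be L-Lipschitz with respect to norm ‖·‖ and f_reg(x) := f(x) + 2L · max(0, ‖x − c‖ − r) with r > 0. For any y with ‖y − c‖ ≥ r, setting y' := c + (r/‖y − c‖)(y − c), we have ‖y' − c‖ = r and f_reg(y') = f(y') ≤ f_reg(y) − L(‖y − c‖ − r). -/

import Mathlib

/-- radial projection onto the ball decreases the regularized objective. -/
theorem stmt_2 {E : Type*} [NormedAddCommGroup E] [NormedSpace ℝ E]
    (f : E → ℝ) (L : ℝ)
    (hlip : ∀ x y : E, |f x - f y| ≤ L * ‖x - y‖)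
    (c : E) (r : ℝ) (hr : 0 < r)
    (freg : E → ℝ)
    (hfreg : ∀ x : E, freg x = f x + 2 * L * max 0 (‖x - c‖ - r))
    (y : E) (hy : r ≤ ‖y - c‖)
    (y' : E) (hy' : y' = c + (r / ‖y - c‖) • (y - c)) :
    ‖y' - c‖ = r ∧ freg y' = f y' ∧ f y' ≤ freg y - L * (‖y - c‖ - r) := by
  have hpos : 0 < ‖y - c‖ := lt_of_lt_of_le hr hy
  have hnorm : ‖y' - c‖ = r := by
    rw [hy']
    simp only [add_sub_cancel_left, norm_smul, Real.norm_eq_abs]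
    rw [abs_of_nonneg (div_nonneg hr.le hpos.le)]
    field_simp
  have hL : 0 ≤ L := by
    have := hlip y c
    nlinarith [abs_nonneg (f y - f c)]
  refine ⟨hnorm, ?_, ?_⟩
  · rw [hfreg, hnorm]
    simp
  · have hdist : ‖y' - y‖ = ‖y - c‖ - r := by
      have : y' - y = (r / ‖y - c‖ - 1) • (y - c) := by
        rw [hy', sub_smul, one_smul]; abel
      rw [this, norm_smul, Real.norm_eq_abs,
        abs_of_nonpos (by rw [sub_nonpos]; exact div_le_one_of_le₀ hy hpos.le)]
      field_simp
      ring
    have h1 : f y' - f y ≤ L * ‖y' - y‖ := le_trans (le_abs_self _) (hlip y' y)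
    rw [hfreg y, hdist] at *
    rw [max_eq_right (by linarith)] at *
    nlinarith
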